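/- For every n ≥ 10, the primorial of 2^n (the product of all primes p ≤ 2^n) is at least 2^(2^n − 1). -/

import Mathlib

open Finset Nat

lemma key30 (j : ℕ) : j + j / 30 ≤ j / 2 + j / 3 + j / 5 + 1 := by omega

lemma div30 (M q : ℕ) :
    30 * M / q + M / q ≤ 15 * M / q + 10 * M / q + 6 * M / q + 1 := by
  rcases Nat.eq_zero_or_pos q with rfl | hq
  · simp
  have h2 : 15 * M / q = 30 * M / q / 2 := by
    rw [Nat.div_div_eq_div_mul, show (30:ℕ) * M = 15 * M * 2 by ring,
      Nat.mul_div_mul_right] <;> norm_num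
  have h3 : 10 * M / q = 30 * M / q / 3 := by
    rw [Nat.div_div_eq_div_mul, show (30:ℕ) * M = 10 * M * 3 by ring,
      Nat.mul_div_mul_right] <;> norm_num
  have h5 : 6 * M / q = 30 * M / q / 5 := by
    rw [Nat.div_div_eq_div_mul, show (30:ℕ) * M = 6 * M * 5 by ring,
      Nat.mul_div_mul_right] <;> norm_num
  have h30 : M / q = 30 * M / q / 30 := by
    rw [Nat.div_div_eq_div_mul, show (30:ℕ) * M = M * 30 by ring,
      Nat.mul_div_mul_right] <;> norm_num
  rw [h2, h3, h5, h30]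
  exact key30 _

lemma legendre_ineq {m p : ℕ} (hp : p.Prime) :
    padicValNat p ((30 * m)!) + padicValNat p (m !) ≤
      padicValNat p ((15 * m)!) + padicValNat p ((10 * m)!) + padicValNat p ((6 * m)!)
        + Nat.log p (30 * m) := by
  haveI := Fact.mk hp
  set b := Nat.log p (30 * m) + 1 with hb
  have hlt : ∀ k : ℕ, k ≤ 30 * m → Nat.log p k < b :=
    fun k hk => lt_of_le_of_lt (Nat.log_mono_right hk) (Nat.lt_succ_self _)
  rw [padicValNat_factorial (hlt (30 * m) le_rfl),
      padicValNat_factorial (hlt m (by omega)),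
      padicValNat_factorial (hlt (15 * m) (by omega)),
      padicValNat_factorial (hlt (10 * m) (by omega)),
      padicValNat_factorial (hlt (6 * m) (by omega))]
  have key : ∑ i ∈ Ico 1 b, (30 * m / p ^ i + m / p ^ i) ≤
      ∑ i ∈ Ico 1 b, (15 * m / p ^ i + 10 * m / p ^ i + 6 * m / p ^ i + 1) :=
    Finset.sum_le_sum fun i _ => div30 m (p ^ i)
  have hcard : ∑ _i ∈ Ico 1 b, 1 = Nat.log p (30 * m) := by
    simp [hb]
  calc (∑ i ∈ Ico 1 b, 30 * m / p ^ i) + ∑ i ∈ Ico 1 b, m / p ^ i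
      = ∑ i ∈ Ico 1 b, (30 * m / p ^ i + m / p ^ i) := by
        rw [Finset.sum_add_distrib]
    _ ≤ ∑ i ∈ Ico 1 b, (15 * m / p ^ i + 10 * m / p ^ i + 6 * m / p ^ i + 1) := key
    _ = ((∑ i ∈ Ico 1 b, 15 * m / p ^ i) + ∑ i ∈ Ico 1 b, 10 * m / p ^ i)
          + ((∑ i ∈ Ico 1 b, 6 * m / p ^ i) + ∑ _i ∈ Ico 1 b, 1) := by
        rw [← Finset.sum_add_distrib, ← Finset.sum_add_distrib, ← Finset.sum_add_distrib]
        exact Finset.sum_congr rfl fun i _ => by ring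
    _ = _ := by rw [hcard]; ring

def Qs (x : ℕ) : ℕ := ∏ p ∈ Finset.filter Nat.Prime (Finset.range (x + 1)), p ^ (Nat.log p x)

lemma Qs_pos (x : ℕ) : 0 < Qs x :=
  Finset.prod_pos fun p hp => pow_pos (Nat.Prime.pos (Finset.mem_filter.mp hp).2) _

lemma log_le_Qs_factorization {x p : ℕ} (hp : p.Prime) (hpx : p ≤ x) :
    Nat.log p x ≤ (Qs x).factorization p := by
  rw [← Nat.Prime.pow_dvd_iff_le_factorization hp (Qs_pos x).ne']
  exact Finset.dvd_prod_of_mem _ (Finset.mem_filter.mpr ⟨Finset.mem_range.mpr (by omega), hp⟩)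

lemma main_dvd (m : ℕ) :
    (30 * m)! * m ! ∣ ((15 * m)! * (10 * m)! * (6 * m)!) * Qs (30 * m) := by
  have h1 : (30 * m)! * m ! ≠ 0 := by positivity
  have h2 : ((15 * m)! * (10 * m)! * (6 * m)!) * Qs (30 * m) ≠ 0 := by
    have := Qs_pos (30 * m); positivity
  rw [← Nat.factorization_le_iff_dvd h1 h2, Finsupp.le_def]
  intro p
  by_cases hp : p.Prime
  · rw [Nat.factorization_mul (by positivity) (by positivity),
        Nat.factorization_mul (by positivity) (Qs_pos (30*m)).ne',
        Nat.factorization_mul (by positivity) (by positivity),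
        Nat.factorization_mul (by positivity) (by positivity)]
    simp only [Finsupp.add_apply]
    rw [Nat.factorization_def _ hp, Nat.factorization_def _ hp, Nat.factorization_def _ hp,
        Nat.factorization_def _ hp, Nat.factorization_def _ hp]
    by_cases hpx : p ≤ 30 * m
    · have := legendre_ineq (m := m) hp
      have hQ := log_le_Qs_factorization hp hpx
      omega
    · haveI := Fact.mk hp
      have h30 : padicValNat p ((30 * m)!) = 0 :=
        padicValNat.eq_zero_of_not_dvd (by
          rw [Nat.Prime.dvd_factorial hp]; omega)
      have hm : padicValNat p (m !) = 0 :=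
        padicValNat.eq_zero_of_not_dvd (by
          rw [Nat.Prime.dvd_factorial hp]; omega)
      omega
  · simp [Nat.factorization_eq_zero_of_not_prime _ hp]

lemma term_step_up {a k : ℕ} (hk : k < 2 * a) :
    (3 * a).choose k * 2 ^ k ≤ (3 * a).choose (k + 1) * 2 ^ (k + 1) := by
  have hid : (3 * a).choose (k + 1) * (k + 1) = (3 * a).choose k * (3 * a - k) :=
    Nat.choose_succ_right_eq _ _
  apply Nat.le_of_mul_le_mul_right (c := k + 1) _ (Nat.succ_pos k)
  calc (3 * a).choose k * 2 ^ k * (k + 1)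
      = (3 * a).choose k * ((k + 1) * 2 ^ k) := by ring
    _ ≤ (3 * a).choose k * ((3 * a - k) * 2 * 2 ^ k) :=
        Nat.mul_le_mul_left _ (Nat.mul_le_mul_right _ (by omega))
    _ = (3 * a).choose k * (3 * a - k) * 2 ^ (k + 1) := by ring
    _ = (3 * a).choose (k + 1) * (k + 1) * 2 ^ (k + 1) := by rw [hid]
    _ = (3 * a).choose (k + 1) * 2 ^ (k + 1) * (k + 1) := by ring

lemma term_step_down {a k : ℕ} (hk : 2 * a ≤ k) :
    (3 * a).choose (k + 1) * 2 ^ (k + 1) ≤ (3 * a).choose k * 2 ^ k := by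
  have hid : (3 * a).choose (k + 1) * (k + 1) = (3 * a).choose k * (3 * a - k) :=
    Nat.choose_succ_right_eq _ _
  apply Nat.le_of_mul_le_mul_right (c := k + 1) _ (Nat.succ_pos k)
  calc (3 * a).choose (k + 1) * 2 ^ (k + 1) * (k + 1)
      = (3 * a).choose (k + 1) * (k + 1) * (2 * 2 ^ k) := by ring
    _ = (3 * a).choose k * (3 * a - k) * (2 * 2 ^ k) := by rw [hid]
    _ = (3 * a).choose k * ((3 * a - k) * 2 * 2 ^ k) := by ring
    _ ≤ (3 * a).choose k * ((k + 1) * 2 ^ k) :=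
        Nat.mul_le_mul_left _ (Nat.mul_le_mul_right _ (by omega))
    _ = (3 * a).choose k * 2 ^ k * (k + 1) := by ring

lemma up_aux (a : ℕ) : ∀ j, (3 * a).choose (2 * a - j) * 2 ^ (2 * a - j) ≤
    (3 * a).choose (2 * a) * 2 ^ (2 * a) := by
  intro j
  induction j with
  | zero => simp
  | succ i ih =>
      by_cases hi : 2 * a - (i + 1) = 2 * a - i
      · rw [hi]; exact ih
      · have hlt : 2 * a - (i + 1) < 2 * a := by omega
        have he : 2 * a - (i + 1) + 1 = 2 * a - i := by omega
        rw [← he] at ih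
        exact (term_step_up hlt).trans ih

lemma down_aux (a : ℕ) : ∀ j, (3 * a).choose (2 * a + j) * 2 ^ (2 * a + j) ≤
    (3 * a).choose (2 * a) * 2 ^ (2 * a) := by
  intro j
  induction j with
  | zero => simp
  | succ i ih =>
      have : 2 * a + (i + 1) = (2 * a + i) + 1 := by omega
      rw [this]
      exact (term_step_down (by omega)).trans ih

lemma term_le_max (a k : ℕ) :
    (3 * a).choose k * 2 ^ k ≤ (3 * a).choose (2 * a) * 2 ^ (2 * a) := by
  rcases le_or_gt k (2 * a) with h | h
  · have : k = 2 * a - (2 * a - k) := by omega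
    rw [this]; exact up_aux a _
  · have : k = 2 * a + (k - 2 * a) := by omega
    rw [this]; exact down_aux a _

-- (ii)  3^(3a) ≤ (3a+1) * ((3a).choose a * 4^a)
lemma three_pow_le (a : ℕ) : 3 ^ (3 * a) ≤ (3 * a + 1) * ((3 * a).choose a * 4 ^ a) := by
  have hexp : (3:ℕ) ^ (3 * a) = ∑ k ∈ range (3 * a + 1), (3 * a).choose k * 2 ^ k := by
    calc (3:ℕ) ^ (3 * a) = (2 + 1) ^ (3 * a) := by norm_num
      _ = ∑ k ∈ range (3 * a + 1), 2 ^ k * 1 ^ (3 * a - k) * (3 * a).choose k :=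
          Commute.add_pow (Commute.all 2 1) (3 * a)
      _ = ∑ k ∈ range (3 * a + 1), (3 * a).choose k * 2 ^ k := by
          apply Finset.sum_congr rfl; intro k _; ring
  rw [hexp]
  have hsymm : (3 * a).choose (2 * a) = (3 * a).choose a := by
    have : (3 : ℕ) * a - a = 2 * a := by omega
    rw [← this, Nat.choose_symm (by omega)]
  calc ∑ k ∈ range (3 * a + 1), (3 * a).choose k * 2 ^ k
      ≤ ∑ _k ∈ range (3 * a + 1), (3 * a).choose (2 * a) * 2 ^ (2 * a) :=
        Finset.sum_le_sum fun k _ => term_le_max a k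
    _ = (3 * a + 1) * ((3 * a).choose (2 * a) * 2 ^ (2 * a)) := by
        rw [Finset.sum_const, Finset.card_range, smul_eq_mul]
    _ = (3 * a + 1) * ((3 * a).choose a * 4 ^ a) := by
        rw [hsymm, show (4:ℕ) ^ a = 2 ^ (2 * a) by rw [pow_mul]; norm_num]

-- (iii) (6m).choose m * 5^(5m) ≤ 6^(6m)
lemma choose_six_le (m : ℕ) : (6 * m).choose m * 5 ^ (5 * m) ≤ 6 ^ (6 * m) := by
  have hexp : (6:ℕ) ^ (6 * m) = ∑ k ∈ range (6 * m + 1), 5 ^ k * 1 ^ (6 * m - k) * (6 * m).choose k := by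
    calc (6:ℕ) ^ (6 * m) = (5 + 1) ^ (6 * m) := by norm_num
      _ = _ := Commute.add_pow (Commute.all 5 1) (6 * m)
  rw [hexp]
  have hmem : 5 * m ∈ range (6 * m + 1) := by simp; omega
  have := Finset.single_le_sum (f := fun k => 5 ^ k * 1 ^ (6 * m - k) * (6 * m).choose k)
    (fun k _ => Nat.zero_le _) hmem
  calc (6 * m).choose m * 5 ^ (5 * m)
      = 5 ^ (5 * m) * 1 ^ (6 * m - 5 * m) * (6 * m).choose (5 * m) := by
        rw [show (6:ℕ) * m - 5 * m = m by omega, one_pow]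
        rw [show (6*m).choose (5*m) = (6*m).choose m by
          rw [show (5:ℕ)*m = 6*m - m by omega, Nat.choose_symm (by omega)]]
        ring
    _ ≤ _ := this

def Pr (x : ℕ) : ℕ := ∏ p ∈ Finset.filter Nat.Prime (Finset.range (x + 1)), p

lemma odd_card (n : ℕ) : #(Finset.filter (fun k => k % 2 = 1) (Finset.range n)) = n / 2 := by
  induction n with
  | zero => simp
  | succ i ih =>
      rw [Finset.range_add_one, Finset.filter_insert]
      by_cases h : i % 2 = 1
      · rw [if_pos h, Finset.card_insert_of_notMem (by simp), ih]; omega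
      · rw [if_neg h, ih]; omega

lemma prime_filter_card_le (z : ℕ) (hz : 1 ≤ z) (s : Finset ℕ)
    (hs : ∀ p ∈ s, p.Prime ∧ p ≤ z) : #s ≤ (z + 1) / 2 := by
  classical
  have hsub : s ⊆ insert 2 ((Finset.filter (fun k => k % 2 = 1) (Finset.range (z + 1))).erase 1) := by
    intro p hp
    obtain ⟨hpp, hpz⟩ := hs p hp
    rcases Nat.Prime.eq_two_or_odd hpp with h2 | hodd
    · simp [h2]
    · apply Finset.mem_insert_of_mem
      apply Finset.mem_erase.mpr
      exact ⟨hpp.ne_one, Finset.mem_filter.mpr ⟨Finset.mem_range.mpr (by omega), hodd⟩⟩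
  have h1mem : (1 : ℕ) ∈ Finset.filter (fun k => k % 2 = 1) (Finset.range (z + 1)) :=
    Finset.mem_filter.mpr ⟨Finset.mem_range.mpr (by omega), by norm_num⟩
  calc #s ≤ _ := Finset.card_le_card hsub
    _ ≤ 1 + #((Finset.filter (fun k => k % 2 = 1) (Finset.range (z + 1))).erase 1) :=
        Finset.card_insert_le _ _ |>.trans (by omega)
    _ = 1 + (#(Finset.filter (fun k => k % 2 = 1) (Finset.range (z + 1))) - 1) := by
        rw [Finset.card_erase_of_mem h1mem]
    _ = #(Finset.filter (fun k => k % 2 = 1) (Finset.range (z + 1))) := by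
        have : 1 ≤ #(Finset.filter (fun k => k % 2 = 1) (Finset.range (z + 1))) :=
          Finset.card_pos.mpr ⟨1, h1mem⟩
        omega
    _ = (z + 1) / 2 := odd_card _

lemma beta (x : ℕ) (hx : 1 ≤ x) : Qs x ≤ Pr x * x ^ ((Nat.sqrt x + 1) / 2) := by
  classical
  set S := Finset.filter Nat.Prime (Finset.range (x + 1)) with hS
  have hsplit : Qs x = Pr x * ∏ p ∈ S, p ^ (Nat.log p x - 1) := by
    rw [Qs, Pr, ← Finset.prod_mul_distrib]
    apply Finset.prod_congr rfl
    intro p hp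
    obtain ⟨hpr, hpp⟩ := Finset.mem_filter.mp hp
    have hple : p ≤ x := by have := Finset.mem_range.mp hpr; omega
    have hlog : 1 ≤ Nat.log p x := Nat.log_pos hpp.one_lt hple
    rw [← pow_succ']
    congr 1
    omega
  rw [hsplit]
  apply Nat.mul_le_mul_left
  have hterm : ∀ p ∈ S, p ^ (Nat.log p x - 1) ≤ if p * p ≤ x then x else 1 := by
    intro p hp
    obtain ⟨hpr, hpp⟩ := Finset.mem_filter.mp hp
    by_cases h : p * p ≤ x
    · rw [if_pos h]
      calc p ^ (Nat.log p x - 1) ≤ p ^ (Nat.log p x) :=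
            Nat.pow_le_pow_right hpp.pos (by omega)
        _ ≤ x := Nat.pow_log_le_self p (by omega)
    · rw [if_neg h]
      have : ¬ (2 ≤ Nat.log p x) := by
        intro hc
        exact h (by
          have := (Nat.le_log_iff_pow_le hpp.one_lt (by omega)).mp hc
          calc p * p = p ^ 2 := by ring
            _ ≤ x := this)
      have : Nat.log p x - 1 = 0 := by omega
      rw [this, pow_zero]
  calc ∏ p ∈ S, p ^ (Nat.log p x - 1) ≤ ∏ p ∈ S, (if p * p ≤ x then x else 1) :=
        Finset.prod_le_prod' hterm
    _ = x ^ #(S.filter (fun p => p * p ≤ x)) := by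
        rw [Finset.prod_ite, Finset.prod_const, Finset.prod_const_one, mul_one]
    _ ≤ x ^ ((Nat.sqrt x + 1) / 2) := by
        apply Nat.pow_le_pow_right (by omega)
        apply prime_filter_card_le (Nat.sqrt x) (by
          rw [Nat.one_le_iff_ne_zero, Ne, Nat.sqrt_eq_zero]; omega)
        intro p hp
        obtain ⟨hpS, hpx⟩ := Finset.mem_filter.mp hp
        exact ⟨(Finset.mem_filter.mp hpS).2, Nat.le_sqrt.mpr hpx⟩


lemma fact_i (m : ℕ) : 4 ^ (15 * m) * ((15 * m)! * (15 * m)!) ≤ (30 * m + 1) * (30 * m)! := by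
  have h := Nat.four_pow_le_two_mul_add_one_mul_central_binom (15 * m)
  have hch : (2 * (15 * m)).choose (15 * m) * ((15 * m)! * (15 * m)!) = (30 * m)! := by
    have := Nat.choose_mul_factorial_mul_factorial (show 15 * m ≤ 30 * m by omega)
    rw [show (30:ℕ) * m - 15 * m = 15 * m by omega] at this
    rw [show (2:ℕ) * (15 * m) = 30 * m by ring]
    calc (30 * m).choose (15 * m) * ((15 * m)! * (15 * m)!)
        = (30 * m).choose (15 * m) * (15 * m)! * (15 * m)! := by ring
      _ = (30 * m)! := this
  calc 4 ^ (15 * m) * ((15 * m)! * (15 * m)!)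
      ≤ (2 * (15 * m) + 1) * (2 * (15 * m)).choose (15 * m) * ((15 * m)! * (15 * m)!) :=
        Nat.mul_le_mul_right _ h
    _ = (30 * m + 1) * ((2 * (15 * m)).choose (15 * m) * ((15 * m)! * (15 * m)!)) := by ring_nf
    _ = (30 * m + 1) * (30 * m)! := by rw [hch]

lemma fact_ii (m : ℕ) :
    3 ^ (15 * m) * ((5 * m)! * (10 * m)!) ≤ (15 * m + 1) * 4 ^ (5 * m) * (15 * m)! := by
  have h := three_pow_le (5 * m)
  rw [show (3:ℕ) * (5 * m) = 15 * m by ring] at h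
  have hch : (15 * m).choose (5 * m) * ((5 * m)! * (10 * m)!) = (15 * m)! := by
    have := Nat.choose_mul_factorial_mul_factorial (show 5 * m ≤ 15 * m by omega)
    rw [show (15:ℕ) * m - 5 * m = 10 * m by omega] at this
    calc (15 * m).choose (5 * m) * ((5 * m)! * (10 * m)!)
        = (15 * m).choose (5 * m) * (5 * m)! * (10 * m)! := by ring
      _ = (15 * m)! := this
  calc 3 ^ (15 * m) * ((5 * m)! * (10 * m)!)
      ≤ (15 * m + 1) * ((15 * m).choose (5 * m) * 4 ^ (5 * m)) * ((5 * m)! * (10 * m)!) :=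
        Nat.mul_le_mul_right _ h
    _ = (15 * m + 1) * 4 ^ (5 * m) * ((15 * m).choose (5 * m) * ((5 * m)! * (10 * m)!)) := by ring
    _ = (15 * m + 1) * 4 ^ (5 * m) * (15 * m)! := by rw [hch]

lemma fact_iii (m : ℕ) : (6 * m)! * 5 ^ (5 * m) ≤ 6 ^ (6 * m) * (m ! * (5 * m)!) := by
  have h := choose_six_le m
  have hch : (6 * m).choose m * (m ! * (5 * m)!) = (6 * m)! := by
    have := Nat.choose_mul_factorial_mul_factorial (show m ≤ 6 * m by omega)
    rw [show (6:ℕ) * m - m = 5 * m by omega] at this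
    calc (6 * m).choose m * (m ! * (5 * m)!)
        = (6 * m).choose m * m ! * (5 * m)! := by ring
      _ = (6 * m)! := this
  calc (6 * m)! * 5 ^ (5 * m) = ((6 * m).choose m * 5 ^ (5 * m)) * (m ! * (5 * m)!) := by
        rw [← hch]; ring
    _ ≤ 6 ^ (6 * m) * (m ! * (5 * m)!) := Nat.mul_le_mul_right _ h

lemma S1 (m : ℕ) :
    12 ^ (15 * m) * 5 ^ (5 * m) * ((15 * m)! * (10 * m)! * (6 * m)!) ≤
      (30 * m + 1) * (15 * m + 1) * 4 ^ (5 * m) * 6 ^ (6 * m) * ((30 * m)! * m !) := by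
  have h12 : (12:ℕ) ^ (15 * m) = 4 ^ (15 * m) * 3 ^ (15 * m) := by
    rw [← mul_pow]; norm_num
  calc 12 ^ (15 * m) * 5 ^ (5 * m) * ((15 * m)! * (10 * m)! * (6 * m)!)
      = (4 ^ (15 * m) * 3 ^ (15 * m) * (15 * m)! * (10 * m)!) * ((6 * m)! * 5 ^ (5 * m)) := by
        rw [h12]; ring
    _ ≤ (4 ^ (15 * m) * 3 ^ (15 * m) * (15 * m)! * (10 * m)!) * (6 ^ (6 * m) * (m ! * (5 * m)!)) :=
        Nat.mul_le_mul_left _ (fact_iii m)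
    _ = (4 ^ (15 * m) * (15 * m)! * 6 ^ (6 * m) * m !) * (3 ^ (15 * m) * ((5 * m)! * (10 * m)!)) := by
        ring
    _ ≤ (4 ^ (15 * m) * (15 * m)! * 6 ^ (6 * m) * m !) * ((15 * m + 1) * 4 ^ (5 * m) * (15 * m)!) :=
        Nat.mul_le_mul_left _ (fact_ii m)
    _ = ((15 * m + 1) * 4 ^ (5 * m) * 6 ^ (6 * m) * m !) * (4 ^ (15 * m) * ((15 * m)! * (15 * m)!)) := by
        ring
    _ ≤ ((15 * m + 1) * 4 ^ (5 * m) * 6 ^ (6 * m) * m !) * ((30 * m + 1) * (30 * m)!) :=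
        Nat.mul_le_mul_left _ (fact_i m)
    _ = (30 * m + 1) * (15 * m + 1) * 4 ^ (5 * m) * 6 ^ (6 * m) * ((30 * m)! * m !) := by ring

lemma Q_lower (m : ℕ) :
    12 ^ (15 * m) * 5 ^ (5 * m) ≤
      Qs (30 * m) * ((30 * m + 1) * (15 * m + 1) * 4 ^ (5 * m) * 6 ^ (6 * m)) := by
  set d := (15 * m)! * (10 * m)! * (6 * m)! with hd
  have hdpos : 0 < d := by positivity
  have hle : (30 * m)! * m ! ≤ d * Qs (30 * m) :=
    Nat.le_of_dvd (by have := Qs_pos (30 * m); positivity) (main_dvd m)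
  apply Nat.le_of_mul_le_mul_left (c := d) _ hdpos
  calc d * (12 ^ (15 * m) * 5 ^ (5 * m))
      = 12 ^ (15 * m) * 5 ^ (5 * m) * ((15 * m)! * (10 * m)! * (6 * m)!) := by rw [hd]; ring
    _ ≤ (30 * m + 1) * (15 * m + 1) * 4 ^ (5 * m) * 6 ^ (6 * m) * ((30 * m)! * m !) := S1 m
    _ ≤ (30 * m + 1) * (15 * m + 1) * 4 ^ (5 * m) * 6 ^ (6 * m) * (d * Qs (30 * m)) :=
        Nat.mul_le_mul_left _ hle
    _ = d * (Qs (30 * m) * ((30 * m + 1) * (15 * m + 1) * 4 ^ (5 * m) * 6 ^ (6 * m))) := by ring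


lemma pow5 (u : ℕ) (hu : 6 ≤ u) : 5 * u + 5 < 2 ^ u := by
  induction u, hu using Nat.le_induction with
  | base => norm_num
  | succ i hi ih => rw [pow_succ]; omega

lemma Pr_pos (x : ℕ) : 0 < Pr x :=
  Finset.prod_pos fun p hp => (Finset.mem_filter.mp hp).2.pos

lemma Pr_mono {x y : ℕ} (h : x ≤ y) : Pr x ≤ Pr y := by
  apply Finset.prod_le_prod_of_subset_of_one_le'
  · exact Finset.filter_subset_filter _ (Finset.range_subset_range.mpr (by omega))
  · intro p hp _
    exact (Finset.mem_filter.mp hp).2.one_lt.le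

theorem primorial_lower_bound (n : ℕ) (hn : 10 ≤ n) :
    2 ^ (2 ^ n - 1) ≤
      ∏ p ∈ Finset.filter Nat.Prime (Finset.range (2 ^ n + 1)), p := by
  show 2 ^ (2 ^ n - 1) ≤ Pr (2 ^ n)
  -- setup
  set m := 2 ^ n / 30 with hm
  set x := 30 * m with hx
  have hxn : x ≤ 2 ^ n := by rw [hx, hm]; exact Nat.mul_div_le (2 ^ n) 30 |>.trans (by omega)
  have hmod := Nat.div_add_mod (2 ^ n) 30
  have hmodlt : 2 ^ n % 30 < 30 := Nat.mod_lt _ (by norm_num)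
  have hxup : 2 ^ n < x + 30 := by omega
  have h1024 : 1024 ≤ 2 ^ n := by
    calc (1024:ℕ) = 2 ^ 10 := by norm_num
      _ ≤ 2 ^ n := Nat.pow_le_pow_right (by norm_num) hn
  have hm34 : 34 ≤ m := by
    rw [hm]
    calc 34 = 1024 / 30 := by norm_num
      _ ≤ 2 ^ n / 30 := Nat.div_le_div_right h1024
  have hx1020 : 1020 ≤ x := by omega
  set z := Nat.sqrt x with hz
  set L := Nat.log 2 x with hL
  have hz31 : 31 ≤ z := by
    rw [hz]; exact Nat.le_sqrt.mpr (by omega)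
  have hzz : z * z ≤ x := by have h := Nat.sqrt_le' x; rwa [pow_two] at h
  have hxzz : x < (z + 1) * (z + 1) := by
    have h := Nat.lt_succ_sqrt' x; rwa [pow_two, Nat.succ_eq_add_one] at h
  set w := Nat.log 2 (z + 1) with hw
  -- claim1/2 : w + 1 ≤ z / 5
  have hu6 : 6 ≤ z / 5 := by omega
  have claim1 : z + 1 < 2 ^ (z / 5) := by
    have h5 := pow5 (z / 5) hu6
    omega
  have claim2 : w + 1 ≤ z / 5 := by
    by_contra hc
    have : z / 5 ≤ w := by omega
    have := (Nat.le_log_iff_pow_le (by norm_num) (show z + 1 ≠ 0 by omega)).mp this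
    omega
  -- claim3 : L + 1 ≤ 2 * (w + 1)
  have hz2 : z + 1 < 2 ^ (w + 1) := Nat.lt_pow_succ_log_self (by norm_num) (z + 1)
  have claim3 : L + 1 ≤ 2 * (w + 1) := by
    by_contra hc
    have h2w : 2 * (w + 1) ≤ L := by omega
    have hle : 2 ^ (2 * (w + 1)) ≤ x :=
      (Nat.le_log_iff_pow_le (by norm_num) (show x ≠ 0 by omega)).mp h2w
    have : 2 ^ (2 * (w + 1)) = 2 ^ (w + 1) * 2 ^ (w + 1) := by
      rw [← pow_add]; congr 1; omega
    nlinarith [hz2, hxzz]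
  -- claim5 : (z/5)*(z+5) + 28 ≤ 8*m
  have claim4 : 6 * z * (z + 5) + 840 ≤ 8 * (z * z) := by nlinarith [hz31]
  have claim5 : z / 5 * (z + 5) + 28 ≤ 8 * m := by
    have h30 : 30 * (z / 5) ≤ 6 * z := by omega
    have : 30 * (z / 5 * (z + 5) + 28) ≤ 8 * (30 * m) := by
      calc 30 * (z / 5 * (z + 5) + 28) = 30 * (z / 5) * (z + 5) + 840 := by ring
        _ ≤ 6 * z * (z + 5) + 840 := by
            have := Nat.mul_le_mul_right (z + 5) h30
            omega
        _ ≤ 8 * (z * z) := claim4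
        _ ≤ 8 * x := by omega
        _ = 8 * (30 * m) := by rw [hx]
    omega
  -- claim7 : E + 28 ≤ 8 * m  where E = (L+1)*((z+5)/2)
  have claim6 : (L + 1) * (z + 5) + 56 ≤ 16 * m := by
    calc (L + 1) * (z + 5) + 56 ≤ 2 * (w + 1) * (z + 5) + 56 :=
          by have := Nat.mul_le_mul_right (z + 5) claim3; omega
      _ ≤ 2 * (z / 5) * (z + 5) + 56 := by
          have := Nat.mul_le_mul_right (z + 5) (show 2 * (w + 1) ≤ 2 * (z / 5) by omega)
          omega
      _ = 2 * (z / 5 * (z + 5)) + 56 := by ring_nf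
      _ ≤ 16 * m := by omega
  have claim7 : (L + 1) * ((z + 5) / 2) + 28 ≤ 8 * m := by
    have h2 : 2 * ((L + 1) * ((z + 5) / 2)) ≤ (L + 1) * (z + 5) := by
      calc 2 * ((L + 1) * ((z + 5) / 2)) = (L + 1) * (2 * ((z + 5) / 2)) := by ring
        _ ≤ (L + 1) * (z + 5) := Nat.mul_le_mul_left _ (by omega)
    omega
  -- numeric power facts
  have pA : (2:ℕ) ^ 53 ≤ 12 ^ 15 := by norm_num
  have pB : (2:ℕ) ^ 11 ≤ 5 ^ 5 := by norm_num
  have pC : (6:ℕ) ^ 6 ≤ 2 ^ 16 := by norm_num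
  -- big bound: 2^(x+28) * A * C ≤ B
  set A := (30 * m + 1) * (15 * m + 1) * 4 ^ (5 * m) * 6 ^ (6 * m) with hA
  set C := x ^ ((z + 1) / 2) with hC
  have hB : (2:ℕ) ^ (64 * m) ≤ 12 ^ (15 * m) * 5 ^ (5 * m) := by
    calc (2:ℕ) ^ (64 * m) = 2 ^ (53 * m) * 2 ^ (11 * m) := by rw [← pow_add]; congr 1; ring
      _ = (2 ^ 53) ^ m * (2 ^ 11) ^ m := by rw [← pow_mul, ← pow_mul]
      _ ≤ (12 ^ 15) ^ m * (5 ^ 5) ^ m :=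
          Nat.mul_le_mul (Nat.pow_le_pow_left pA m) (Nat.pow_le_pow_left pB m)
      _ = 12 ^ (15 * m) * 5 ^ (5 * m) := by rw [← pow_mul, ← pow_mul]
  have hAle : A ≤ x * x * 2 ^ (26 * m) := by
    have h1 : (30 * m + 1) * (15 * m + 1) ≤ x * x := by
      rw [hx]; nlinarith [hm34]
    have h4 : (4:ℕ) ^ (5 * m) = 2 ^ (10 * m) := by
      rw [show (4:ℕ) = 2 ^ 2 by norm_num, ← pow_mul]; congr 1; ring
    have h6 : (6:ℕ) ^ (6 * m) ≤ 2 ^ (16 * m) := by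
      calc (6:ℕ) ^ (6 * m) = (6 ^ 6) ^ m := by rw [← pow_mul]
        _ ≤ (2 ^ 16) ^ m := Nat.pow_le_pow_left pC m
        _ = 2 ^ (16 * m) := by rw [← pow_mul]
    calc A = (30 * m + 1) * (15 * m + 1) * (4 ^ (5 * m) * 6 ^ (6 * m)) := by rw [hA]; ring
      _ ≤ x * x * (4 ^ (5 * m) * 6 ^ (6 * m)) := Nat.mul_le_mul_right _ h1
      _ = x * x * (2 ^ (10 * m) * 6 ^ (6 * m)) := by rw [h4]
      _ ≤ x * x * (2 ^ (10 * m) * 2 ^ (16 * m)) :=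
          Nat.mul_le_mul_left _ (Nat.mul_le_mul_left _ h6)
      _ = x * x * 2 ^ (26 * m) := by rw [← pow_add]; congr 2; ring
  have hxlt : x < 2 ^ (L + 1) := Nat.lt_pow_succ_log_self (by norm_num) x
  have hxxC : x * x * C ≤ 2 ^ ((L + 1) * ((z + 5) / 2)) := by
    have he : x * x * C = x ^ ((z + 5) / 2) := by
      calc x * x * C = x ^ (2 + (z + 1) / 2) := by rw [hC, pow_add]; ring
        _ = x ^ ((z + 5) / 2) := by congr 1; omega
    rw [he]
    calc x ^ ((z + 5) / 2) ≤ (2 ^ (L + 1)) ^ ((z + 5) / 2) :=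
          Nat.pow_le_pow_left hxlt.le _
      _ = 2 ^ ((L + 1) * ((z + 5) / 2)) := by rw [← pow_mul]
  have main : 2 ^ (x + 28) * A * C ≤ 12 ^ (15 * m) * 5 ^ (5 * m) := by
    calc 2 ^ (x + 28) * A * C ≤ 2 ^ (x + 28) * (x * x * 2 ^ (26 * m)) * C := by
          have := Nat.mul_le_mul_right C (Nat.mul_le_mul_left (2 ^ (x + 28)) hAle)
          exact this
      _ = 2 ^ (x + 28) * 2 ^ (26 * m) * (x * x * C) := by ring
      _ ≤ 2 ^ (x + 28) * 2 ^ (26 * m) * 2 ^ ((L + 1) * ((z + 5) / 2)) :=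
          Nat.mul_le_mul_left _ hxxC
      _ = 2 ^ (30 * m + 28 + 26 * m + (L + 1) * ((z + 5) / 2)) := by
          rw [← pow_add, ← pow_add, hx]
      _ ≤ 2 ^ (64 * m) := Nat.pow_le_pow_right (by norm_num) (by omega)
      _ ≤ 12 ^ (15 * m) * 5 ^ (5 * m) := hB
  have hq : 2 ^ (x + 28) * A * C ≤ Qs x * A := by
    calc 2 ^ (x + 28) * A * C ≤ 12 ^ (15 * m) * 5 ^ (5 * m) := main
      _ ≤ Qs (30 * m) * ((30 * m + 1) * (15 * m + 1) * 4 ^ (5 * m) * 6 ^ (6 * m)) := Q_lower m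
      _ = Qs x * A := by rw [hx, hA]
  have hq2 : 2 ^ (x + 28) * C ≤ Qs x := by
    have hApos : 0 < A := by
      rw [hA]; positivity
    apply Nat.le_of_mul_le_mul_left (c := A) _ hApos
    calc A * (2 ^ (x + 28) * C) = 2 ^ (x + 28) * A * C := by ring
      _ ≤ Qs x * A := hq
      _ = A * Qs x := by ring
  have hq3 : 2 ^ (x + 28) ≤ Pr x := by
    have hCpos : 0 < C := by rw [hC]; positivity
    apply Nat.le_of_mul_le_mul_right (c := C) _ hCpos
    calc 2 ^ (x + 28) * C ≤ Qs x := hq2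
      _ ≤ Pr x * x ^ ((Nat.sqrt x + 1) / 2) := beta x (by omega)
      _ = Pr x * C := by rw [hC, hz]
  calc 2 ^ (2 ^ n - 1) ≤ 2 ^ (x + 28) := Nat.pow_le_pow_right (by norm_num) (by omega)
    _ ≤ Pr x := hq3
    _ ≤ Pr (2 ^ n) := Pr_mono hxn
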